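/- arXiv:1508.00863 — 3 statements merged into one kernel-verified Lean document; each statement's English description precedes it below -/
import Mathlib

section
/- For every ρ > 0, every real k > 0 and every real x > 0, the Wright function satisfies the structural representation ₁Ψ₁(ρ,k;ρ,0;x) = ∫_0^∞ e^{-τ} τ^{k-1} φ(ρ,0; x·τ^ρ) dτ. -/
open Real MeasureTheory Set Filter

/-- The Wright function ₁Ψ₁(ρ,k;ρ,0;x) = ∑_{n=1}^∞ (Γ(k+ρn)/Γ(ρn)) xⁿ/n!,
with the convention 1/Γ = 0 at nonpositive integers (where `Real.Gamma` vanishes). -/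
noncomputable def wrightPsi (ρ k x : ℝ) : ℝ :=
  ∑' n : ℕ, Real.Gamma (k + ρ * ((n : ℝ) + 1)) / Real.Gamma (ρ * ((n : ℝ) + 1)) *
    (x ^ (n + 1) / ((n + 1).factorial : ℝ))

/-- The reduced Wright function φ(ρ,0;x) = ∑_{n=1}^∞ xⁿ/(n! Γ(ρn)),
with the convention 1/Γ = 0 at nonpositive integers. -/
noncomputable def redWright (ρ x : ℝ) : ℝ :=
  ∑' n : ℕ, x ^ (n + 1) / (((n + 1).factorial : ℝ) * Real.Gamma (ρ * ((n : ℝ) + 1)))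

lemma myGamma_ge_one {t : ℝ} (ht : 2 ≤ t) : 1 ≤ Real.Gamma t := by
  rcases eq_or_lt_of_le ht with h | h
  · rw [← h, Real.Gamma_two]
  · rw [← Real.Gamma_two]
    exact (Real.Gamma_strictMonoOn_Ici (by norm_num) (le_of_lt h) h).le

lemma myGamma_mul_ge_one {s : ℝ} (hs : 0 < s) : 1 ≤ s * (s + 1) * Real.Gamma s := by
  have h1 : Real.Gamma (s + 1 + 1) = (s + 1) * Real.Gamma (s + 1) :=
    Real.Gamma_add_one (by positivity)
  have h2 : Real.Gamma (s + 1) = s * Real.Gamma s := Real.Gamma_add_one hs.ne'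
  have h3 : 1 ≤ Real.Gamma (s + 1 + 1) := myGamma_ge_one (by linarith)
  nlinarith [h3, h1, h2]

lemma redWright_term_summable (ρ y : ℝ) (hρ : 0 < ρ) (hy : 0 ≤ y) :
    Summable (fun n : ℕ =>
      y ^ (n + 1) / (((n + 1).factorial : ℝ) * Real.Gamma (ρ * ((n : ℝ) + 1)))) := by
  have hmaj : Summable (fun n : ℕ => ρ * (ρ + 1) * y * ((2 * y) ^ n / (n.factorial : ℝ))) :=
    (Real.summable_pow_div_factorial (2 * y)).mul_left _
  refine hmaj.of_nonneg_of_le (fun n => by positivity) (fun n => ?_)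
  set s : ℝ := ρ * ((n : ℝ) + 1) with hs_def
  have hN1 : (1 : ℝ) ≤ (n : ℝ) + 1 := by have := Nat.cast_nonneg (α := ℝ) n; linarith
  have hs : 0 < s := by positivity
  have hΓpos : 0 < Real.Gamma s := Real.Gamma_pos_of_pos hs
  have hG : 1 ≤ s * (s + 1) * Real.Gamma s := myGamma_mul_ge_one hs
  have h1 : 1 / Real.Gamma s ≤ s * (s + 1) := by
    rw [div_le_iff₀ hΓpos]; linarith
  have hn2 : ((n : ℝ) + 1) ≤ 2 ^ n := by
    have := Nat.lt_two_pow_self (n := n)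
    exact_mod_cast Nat.succ_le_of_lt this
  have h2 : s * (s + 1) ≤ ρ * (ρ + 1) * (((n : ℝ) + 1) * 2 ^ n) := by
    have e1 : s + 1 ≤ (ρ + 1) * ((n : ℝ) + 1) := by rw [hs_def]; nlinarith
    have e2 : s * (s + 1) ≤ ρ * ((n : ℝ) + 1) * ((ρ + 1) * ((n : ℝ) + 1)) :=
      mul_le_mul_of_nonneg_left e1 (by positivity)
    calc s * (s + 1) ≤ ρ * ((n : ℝ) + 1) * ((ρ + 1) * ((n : ℝ) + 1)) := e2
      _ = ρ * (ρ + 1) * (((n : ℝ) + 1) * ((n : ℝ) + 1)) := by ring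
      _ ≤ ρ * (ρ + 1) * (((n : ℝ) + 1) * 2 ^ n) := by
          apply mul_le_mul_of_nonneg_left _ (by positivity)
          exact mul_le_mul_of_nonneg_left hn2 (by positivity)
  have hfac : ((n + 1).factorial : ℝ) = ((n : ℝ) + 1) * (n.factorial : ℝ) := by
    push_cast [Nat.factorial_succ]; ring
  have key : y ^ (n + 1) / (((n + 1).factorial : ℝ) * Real.Gamma s)
      = y ^ (n + 1) / ((n + 1).factorial : ℝ) * (1 / Real.Gamma s) := by
    rw [mul_one_div, div_div]
  rw [key]
  calc y ^ (n + 1) / ((n + 1).factorial : ℝ) * (1 / Real.Gamma s)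
      ≤ y ^ (n + 1) / ((n + 1).factorial : ℝ) * (s * (s + 1)) :=
        mul_le_mul_of_nonneg_left h1 (by positivity)
    _ ≤ y ^ (n + 1) / ((n + 1).factorial : ℝ) * (ρ * (ρ + 1) * (((n : ℝ) + 1) * 2 ^ n)) :=
        mul_le_mul_of_nonneg_left h2 (by positivity)
    _ = ρ * (ρ + 1) * y * ((2 * y) ^ n / (n.factorial : ℝ)) := by
        rw [hfac, mul_pow, pow_succ]
        have hnf : (n.factorial : ℝ) ≠ 0 := by positivity
        field_simp

lemma my_tsum_toReal {f : ℕ → ℝ} (hf : ∀ n, 0 ≤ f n) :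
    ∑' n, f n = (∑' n, ENNReal.ofReal (f n)).toReal := by
  by_cases h : Summable f
  · rw [← ENNReal.ofReal_tsum_of_nonneg hf h, ENNReal.toReal_ofReal (tsum_nonneg hf)]
  · rw [tsum_eq_zero_of_not_summable h]
    have htop : ∑' n, ENNReal.ofReal (f n) = ⊤ := by
      by_contra htop
      apply h
      have := ENNReal.summable_toReal htop
      simpa [ENNReal.toReal_ofReal, hf] using this.congr fun n =>
        ENNReal.toReal_ofReal (hf n)
    simp [htop]

theorem wright_structural_rep_pos (ρ k x : ℝ) (hρ : 0 < ρ) (hk : 0 < k) (hx : 0 < x) :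
    wrightPsi ρ k x =
      ∫ τ in Ioi (0 : ℝ), Real.exp (-τ) * τ ^ (k - 1) * redWright ρ (x * τ ^ ρ) := by
  set a : ℕ → ℝ := fun n => Real.Gamma (k + ρ * ((n : ℝ) + 1)) / Real.Gamma (ρ * ((n : ℝ) + 1)) *
    (x ^ (n + 1) / ((n + 1).factorial : ℝ)) with ha_def
  set f : ℕ → ℝ → ℝ := fun n τ => Real.exp (-τ) * τ ^ (k - 1) *
    ((x * τ ^ ρ) ^ (n + 1) / (((n + 1).factorial : ℝ) * Real.Gamma (ρ * ((n : ℝ) + 1))))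
    with hf_def
  have hspos : ∀ n : ℕ, 0 < ρ * ((n : ℝ) + 1) := fun n => by positivity
  have hΓpos : ∀ n : ℕ, 0 < Real.Gamma (ρ * ((n : ℝ) + 1)) :=
    fun n => Real.Gamma_pos_of_pos (hspos n)
  have ha_nonneg : ∀ n, 0 ≤ a n := fun n => by
    have h1 : 0 < Real.Gamma (k + ρ * ((n : ℝ) + 1)) :=
      Real.Gamma_pos_of_pos (by have := hspos n; linarith)
    have h2 := hΓpos n
    rw [ha_def]
    positivity
  -- measurability of each f n
  have hmeas : ∀ n, Measurable (f n) := by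
    intro n
    rw [hf_def]
    fun_prop
  -- per-term integral computation
  have hterm : ∀ n : ℕ, IntegrableOn (f n) (Ioi 0) ∧ (∫ τ in Ioi 0, f n τ) = a n := by
    intro n
    set s : ℝ := ρ * ((n : ℝ) + 1) with hs_def
    have hs : 0 < s := hspos n
    set c : ℝ := x ^ (n + 1) / (((n + 1).factorial : ℝ) * Real.Gamma s) with hc_def
    have h_eq : EqOn (f n) (fun τ => c * (Real.exp (-τ) * τ ^ (k + s - 1))) (Ioi 0) := by
      intro τ hτ
      have hτ' : (0 : ℝ) < τ := hτ
      have e1 : (τ ^ ρ) ^ (n + 1) = τ ^ s := by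
        rw [← Real.rpow_natCast (τ ^ ρ) (n + 1), ← Real.rpow_mul hτ'.le, hs_def]
        norm_num
      have e2 : τ ^ (k - 1) * τ ^ s = τ ^ (k + s - 1) := by
        rw [← Real.rpow_add hτ']; ring_nf
      show Real.exp (-τ) * τ ^ (k - 1) *
          ((x * τ ^ ρ) ^ (n + 1) / (((n + 1).factorial : ℝ) * Real.Gamma s))
          = c * (Real.exp (-τ) * τ ^ (k + s - 1))
      rw [mul_pow, e1, ← e2, hc_def]
      ring
    have hint : IntegrableOn (fun τ => c * (Real.exp (-τ) * τ ^ (k + s - 1))) (Ioi 0) := by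
      have := (Real.GammaIntegral_convergent (by linarith : (0:ℝ) < k + s)).const_mul c
      exact this
    constructor
    · exact hint.congr_fun (fun τ hτ => (h_eq hτ).symm) measurableSet_Ioi
    · rw [setIntegral_congr_fun measurableSet_Ioi h_eq, MeasureTheory.integral_const_mul,
        ← Real.Gamma_eq_integral (by linarith : (0:ℝ) < k + s)]
      rw [ha_def, hc_def]
      have h1 : Real.Gamma s ≠ 0 := (hΓpos n).ne'
      have h2 : (((n+1).factorial : ℝ)) ≠ 0 := by positivity
      field_simp
      ring
  -- pointwise identity for the ENNReal-valued integrand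
  have hpt : ∀ τ ∈ Ioi (0 : ℝ),
      ENNReal.ofReal (Real.exp (-τ) * τ ^ (k - 1) * redWright ρ (x * τ ^ ρ))
        = ∑' n, ENNReal.ofReal (f n τ) := by
    intro τ hτ
    have hτ' : (0 : ℝ) < τ := hτ
    have hy : (0 : ℝ) ≤ x * τ ^ ρ := by
      have := Real.rpow_pos_of_pos hτ' ρ; positivity
    have hsum := redWright_term_summable ρ (x * τ ^ ρ) hρ hy
    have hnn : ∀ n : ℕ, 0 ≤ (x * τ ^ ρ) ^ (n + 1) /
        (((n + 1).factorial : ℝ) * Real.Gamma (ρ * ((n : ℝ) + 1))) := fun n => by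
      have := hΓpos n; positivity
    have hcnn : (0 : ℝ) ≤ Real.exp (-τ) * τ ^ (k - 1) := by positivity
    rw [redWright, ENNReal.ofReal_mul hcnn, ENNReal.ofReal_tsum_of_nonneg hnn hsum,
      ← ENNReal.tsum_mul_left]
    exact tsum_congr fun n => (ENNReal.ofReal_mul hcnn).symm
  -- the key lintegral computation
  have key : (∫⁻ τ in Ioi (0 : ℝ),
      ENNReal.ofReal (Real.exp (-τ) * τ ^ (k - 1) * redWright ρ (x * τ ^ ρ)))
        = ∑' n, ENNReal.ofReal (a n) := by
    rw [setLIntegral_congr_fun measurableSet_Ioi hpt]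
    rw [lintegral_tsum (fun n => ((hmeas n).ennreal_ofReal).aemeasurable)]
    refine tsum_congr fun n => ?_
    have hnn : 0 ≤ᵐ[volume.restrict (Ioi (0:ℝ))] f n := by
      refine (ae_restrict_iff' measurableSet_Ioi).2 (ae_of_all _ fun τ hτ => ?_)
      have hτ' : (0 : ℝ) < τ := hτ
      have h1 := hΓpos n
      have h2 : (0:ℝ) < τ ^ ρ := Real.rpow_pos_of_pos hτ' ρ
      have h3 : (0:ℝ) ≤ τ ^ (k-1) := (Real.rpow_pos_of_pos hτ' _).le
      show 0 ≤ Real.exp (-τ) * τ ^ (k - 1) * _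
      positivity
    rw [← MeasureTheory.ofReal_integral_eq_lintegral_ofReal (hterm n).1 hnn, (hterm n).2]
  -- nonnegativity of the real integrand
  have hrnn : 0 ≤ᵐ[volume.restrict (Ioi (0:ℝ))]
      fun τ => Real.exp (-τ) * τ ^ (k - 1) * redWright ρ (x * τ ^ ρ) := by
    refine (ae_restrict_iff' measurableSet_Ioi).2 (ae_of_all _ fun τ hτ => ?_)
    have hτ' : (0 : ℝ) < τ := hτ
    have h3 : (0:ℝ) ≤ τ ^ (k-1) := (Real.rpow_pos_of_pos hτ' _).le
    have h4 : 0 ≤ redWright ρ (x * τ ^ ρ) := by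
      rw [redWright]
      refine tsum_nonneg fun n => ?_
      have h1 := hΓpos n
      have h2 : (0:ℝ) < τ ^ ρ := Real.rpow_pos_of_pos hτ' ρ
      positivity
    positivity
  -- measurability of the real integrand
  have hrmeas : AEStronglyMeasurable
      (fun τ => Real.exp (-τ) * τ ^ (k - 1) * redWright ρ (x * τ ^ ρ))
      (volume.restrict (Ioi (0:ℝ))) := by
    have hg : Measurable (fun τ : ℝ => (∑' n, ENNReal.ofReal (f n τ)).toReal) :=
      (Measurable.ennreal_tsum fun n => (hmeas n).ennreal_ofReal).ennreal_toReal
    refine hg.aestronglyMeasurable.congr ?_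
    refine (ae_restrict_iff' measurableSet_Ioi).2 (ae_of_all _ fun τ hτ => ?_)
    have hτ' : (0 : ℝ) < τ := hτ
    have h3 : (0:ℝ) ≤ τ ^ (k-1) := (Real.rpow_pos_of_pos hτ' _).le
    have h4 : 0 ≤ redWright ρ (x * τ ^ ρ) := by
      rw [redWright]
      refine tsum_nonneg fun n => ?_
      have h1 := hΓpos n
      have h2 : (0:ℝ) < τ ^ ρ := Real.rpow_pos_of_pos hτ' ρ
      positivity
    show (∑' n, ENNReal.ofReal (f n τ)).toReal = _
    rw [← hpt τ hτ, ENNReal.toReal_ofReal (by positivity)]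
  rw [integral_eq_lintegral_of_nonneg_ae hrnn hrmeas, key]
  rw [wrightPsi]
  exact my_tsum_toReal ha_nonneg
end

section
/- For every real ρ ≠ 0 and every positive integer k, there exist real numbers D_0, D_1, …, D_{k-1} with D_0 = 1 and (if k ≥ 2) D_1 = (1+ρ)·k(k-1)/2, such that for every real x ≠ 0, ∑_{n=1}^∞ (∏_{j=0}^{k-1} (ρn+j)) · xⁿ/n! = (ρx)^k e^x ∑_{n=0}^{k-1} D_n (ρx)^{-n}. (Here ∏_{j=0}^{k-1}(ρn+j) = Γ(k+ρn)/Γ(ρn), so the left-hand side is the Wright function ₁Ψ₁(ρ,k;ρ,0;x).) -/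
open Real Finset Polynomial

noncomputable def wrightR (ρ : ℝ) : ℕ → ℕ → Polynomial ℝ
  | 0, _ => 1
  | (k+1), s => C ρ * X * wrightR ρ k (s+1) + C (ρ * s + k + 1) * wrightR ρ k s

theorem wrightR_zero (ρ : ℝ) (s : ℕ) : wrightR ρ 0 s = 1 := rfl

theorem wrightR_succ (ρ : ℝ) (k s : ℕ) :
    wrightR ρ (k+1) s = C ρ * X * wrightR ρ k (s+1) + C (ρ * s + k + 1) * wrightR ρ k s := rfl

theorem wrightR_natDegree_le (ρ : ℝ) : ∀ k s, (wrightR ρ k s).natDegree ≤ k := by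
  intro k
  induction k with
  | zero => intro s; simp [wrightR_zero]
  | succ k ih =>
      intro s
      rw [wrightR_succ]
      refine le_trans (Polynomial.natDegree_add_le _ _) (max_le ?_ ?_)
      · refine le_trans (Polynomial.natDegree_mul_le) ?_
        have := ih (s+1)
        have h2 : (C ρ * X : Polynomial ℝ).natDegree ≤ 1 := by
          refine le_trans (Polynomial.natDegree_mul_le) ?_
          simp
        omega
      · exact le_trans (Polynomial.natDegree_C_mul_le _ _) (le_trans (ih s) (by omega))

theorem wrightR_coeff_top (ρ : ℝ) : ∀ k s, (wrightR ρ k s).coeff k = ρ ^ k := by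
  intro k
  induction k with
  | zero => intro s; simp [wrightR_zero]
  | succ k ih =>
      intro s
      have hdeg : (wrightR ρ k s).coeff (k+1) = 0 :=
        Polynomial.coeff_eq_zero_of_natDegree_lt (by have := wrightR_natDegree_le ρ k s; omega)
      rw [wrightR_succ, Polynomial.coeff_add, Polynomial.coeff_C_mul, hdeg, mul_zero, add_zero,
        mul_assoc, Polynomial.coeff_C_mul, Polynomial.coeff_X_mul, ih (s+1)]
      ring

theorem wrightR_coeff_sub (ρ : ℝ) : ∀ k s, (wrightR ρ (k+1) s).coeff k =
    ρ ^ k * (ρ * s * (k+1) + (1+ρ) * (k+1) * k / 2 + (k+1)) := by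
  intro k
  induction k with
  | zero => intro s; simp [wrightR_succ, wrightR_zero]
  | succ k ih =>
      intro s
      have htop := wrightR_coeff_top ρ (k+1) s
      rw [wrightR_succ ρ (k+1) s, Polynomial.coeff_add, Polynomial.coeff_C_mul, htop,
        mul_assoc, Polynomial.coeff_C_mul, Polynomial.coeff_X_mul, ih (s+1)]
      push_cast
      ring

theorem wrightR_hasSum (ρ : ℝ) : ∀ (k s : ℕ) (x : ℝ),
    HasSum (fun n : ℕ => (∏ j ∈ Finset.range k, (ρ * ((n:ℝ) + (s:ℝ)) + ((j:ℝ)+1))) *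
        (x ^ n / (n.factorial : ℝ)))
      (Real.exp x * (wrightR ρ k s).eval x) := by
  intro k
  induction k with
  | zero =>
      intro s x
      simp only [Finset.range_zero, Finset.prod_empty, one_mul, wrightR_zero,
        Polynomial.eval_one, mul_one]
      rw [Real.exp_eq_exp_ℝ]
      exact NormedSpace.expSeries_div_hasSum_exp x
  | succ k ih =>
      intro s x
      have h1 : HasSum (fun n : ℕ => (ρ * x) *
          ((∏ j ∈ Finset.range k, (ρ * ((n:ℝ) + ((s+1:ℕ):ℝ)) + ((j:ℝ)+1))) *
            (x ^ n / (n.factorial : ℝ))))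
          ((ρ * x) * (Real.exp x * (wrightR ρ k (s+1)).eval x)) :=
        (ih (s+1) x).mul_left _
      set g : ℕ → ℝ := fun n => (ρ * n) *
          ((∏ j ∈ Finset.range k, (ρ * ((n:ℝ) + (s:ℝ)) + ((j:ℝ)+1))) *
            (x ^ n / (n.factorial : ℝ))) with hg
      have hshift : (fun n : ℕ => g (n + 1)) = fun n : ℕ => (ρ * x) *
          ((∏ j ∈ Finset.range k, (ρ * ((n:ℝ) + ((s+1:ℕ):ℝ)) + ((j:ℝ)+1))) *
            (x ^ n / (n.factorial : ℝ))) := by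
        funext n
        have hprod : (∏ j ∈ Finset.range k, (ρ * (((n+1:ℕ):ℝ) + (s:ℝ)) + ((j:ℝ)+1))) =
            ∏ j ∈ Finset.range k, (ρ * ((n:ℝ) + ((s+1:ℕ):ℝ)) + ((j:ℝ)+1)) := by
          apply Finset.prod_congr rfl
          intro j _
          push_cast
          ring
        simp only [hg, hprod, Nat.factorial_succ]
        have hn : ((n:ℝ) + 1) ≠ 0 := by positivity
        have hf : ((n.factorial : ℝ)) ≠ 0 := by positivity
        push_cast
        field_simp
        ring
      have h2 : HasSum g ((ρ * x) * (Real.exp x * (wrightR ρ k (s+1)).eval x)) := by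
        have := (hasSum_nat_add_iff (f := g) 1).mp (hshift ▸ h1)
        simpa [hg] using this
      have h3 : HasSum (fun n : ℕ => (ρ * (s:ℝ) + (k:ℝ) + 1) *
          ((∏ j ∈ Finset.range k, (ρ * ((n:ℝ) + (s:ℝ)) + ((j:ℝ)+1))) *
            (x ^ n / (n.factorial : ℝ))))
          ((ρ * (s:ℝ) + (k:ℝ) + 1) * (Real.exp x * (wrightR ρ k s).eval x)) :=
        (ih s x).mul_left _
      have h4 := h2.add h3
      have heq : (fun n : ℕ => g n + (ρ * (s:ℝ) + (k:ℝ) + 1) *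
          ((∏ j ∈ Finset.range k, (ρ * ((n:ℝ) + (s:ℝ)) + ((j:ℝ)+1))) *
            (x ^ n / (n.factorial : ℝ)))) =
          fun n : ℕ => (∏ j ∈ Finset.range (k+1), (ρ * ((n:ℝ) + (s:ℝ)) + ((j:ℝ)+1))) *
            (x ^ n / (n.factorial : ℝ)) := by
        funext n
        rw [Finset.prod_range_succ]
        simp only [hg]
        ring
      rw [heq] at h4
      convert h4 using 1
      rw [wrightR_succ]
      simp only [Polynomial.eval_add, Polynomial.eval_mul, Polynomial.eval_C, Polynomial.eval_X]
      ring

theorem wright_polynomial_representation (ρ : ℝ) (hρ : ρ ≠ 0) (k : ℕ) (hk : 1 ≤ k) :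
    ∃ D : ℕ → ℝ, D 0 = 1 ∧
      (2 ≤ k → D 1 = (1 + ρ) * (k : ℝ) * ((k : ℝ) - 1) / 2) ∧
      ∀ x : ℝ, x ≠ 0 →
        (∑' n : ℕ, (∏ j ∈ Finset.range k, (ρ * ((n : ℝ) + 1) + (j : ℝ))) *
            (x ^ (n + 1) / ((n + 1).factorial : ℝ))) =
          (ρ * x) ^ k * Real.exp x * ∑ n ∈ Finset.range k, D n * ((ρ * x) ^ n)⁻¹ := by
  obtain ⟨k', rfl⟩ : ∃ k', k = k' + 1 := ⟨k - 1, by omega⟩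
  set M : Polynomial ℝ := wrightR ρ k' 1 with hM
  refine ⟨fun n => M.coeff (k' - n) * (ρ ^ (k' - n))⁻¹, ?_, ?_, ?_⟩
  · simp only [Nat.sub_zero, hM, wrightR_coeff_top]
    field_simp
  · intro h2
    obtain ⟨m, rfl⟩ : ∃ m, k' = m + 1 := ⟨k' - 1, by omega⟩
    simp only []
    have hc : m + 1 - 1 = m := by omega
    rw [hc, hM, wrightR_coeff_sub ρ m 1]
    have hp : (ρ : ℝ) ^ m ≠ 0 := pow_ne_zero _ hρ
    field_simp
    push_cast
    ring
  · intro x hx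
    -- LHS
    have hs := (wrightR_hasSum ρ k' 1 x).mul_left (ρ * x)
    have hterm : (fun n : ℕ => (ρ * x) *
        ((∏ j ∈ Finset.range k', (ρ * ((n:ℝ) + ((1:ℕ):ℝ)) + ((j:ℝ)+1))) *
          (x ^ n / (n.factorial : ℝ)))) =
        fun n : ℕ => (∏ j ∈ Finset.range (k'+1), (ρ * ((n : ℝ) + 1) + (j : ℝ))) *
          (x ^ (n + 1) / ((n + 1).factorial : ℝ)) := by
      funext n
      rw [Finset.prod_range_succ']
      have hprod : (∏ j ∈ Finset.range k', (ρ * ((n:ℝ) + 1) + ((j+1:ℕ):ℝ))) =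
          ∏ j ∈ Finset.range k', (ρ * ((n:ℝ) + ((1:ℕ):ℝ)) + ((j:ℝ)+1)) := by
        apply Finset.prod_congr rfl
        intro j _
        push_cast
        ring
      rw [hprod]
      have hn : ((n:ℝ) + 1) ≠ 0 := by positivity
      have hf : ((n.factorial : ℝ)) ≠ 0 := by positivity
      rw [Nat.factorial_succ]
      push_cast
      field_simp
      ring
    rw [hterm] at hs
    rw [hs.tsum_eq]
    -- RHS
    have heval : M.eval x = ∑ i ∈ Finset.range (k'+1), M.coeff i * x ^ i :=
      Polynomial.eval_eq_sum_range' (lt_of_le_of_lt (wrightR_natDegree_le ρ k' 1) (by omega)) x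
    rw [heval, Finset.mul_sum, Finset.mul_sum, ← Finset.sum_range_reflect
      (fun i => ρ * x * (Real.exp x * (M.coeff i * x ^ i))) (k'+1)]
    rw [Finset.mul_sum]
    apply Finset.sum_congr rfl
    intro n hn
    have hnk : n ≤ k' := by simpa using Nat.lt_succ_iff.mp (Finset.mem_range.mp hn)
    have h1 : k' + 1 - 1 - n = k' - n := by omega
    rw [h1]
    obtain ⟨m, hm⟩ : ∃ m, k' = n + m := ⟨k' - n, by omega⟩
    have h2 : k' - n = m := by omega
    rw [h2, hm]
    have hρx : (ρ * x) ≠ 0 := mul_ne_zero hρ hx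
    rw [show (n + m + 1) = (n + (m + 1)) from rfl, pow_add, pow_add, mul_pow]
    field_simp
    rw [show n + m - n = m by omega]
    ring
end

section
/- For every real x > 0, φ(-1/3, 0; x) = -(x^{3/2}/(3√3)) · (J_{-1/3}(y) + J_{1/3}(y)), where y = 2x^{3/2}/(3√3). -/
open Real MeasureTheory Set Filter

/-- The Bessel function of the first kind,
J_ν(x) = ∑_{m=0}^∞ (-1)^m (x/2)^{2m+ν}/(m! Γ(ν+m+1)). -/
noncomputable def besselJ (ν x : ℝ) : ℝ :=
  ∑' m : ℕ, (-1 : ℝ) ^ m * (x / 2) ^ (2 * (m : ℝ) + ν) /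
    ((m.factorial : ℝ) * Real.Gamma (ν + (m : ℝ) + 1))

lemma gammaC1 (m : ℕ) : (3:ℝ)^(3*m+1) * (m.factorial:ℝ) * Real.Gamma ((m:ℝ)+2/3)
    = (-1:ℝ)^(m+1) * ((3*m+1).factorial : ℝ) * Real.Gamma (-(m:ℝ)-1/3) := by
  induction m with
  | zero =>
    have h : Real.Gamma ((2:ℝ)/3) = (-1/3) * Real.Gamma (-1/3) := by
      rw [show (2:ℝ)/3 = -1/3+1 by norm_num]; exact Real.Gamma_add_one (by norm_num)
    norm_num [h]; ring
  | succ m ih =>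
    have h1 : Real.Gamma ((m:ℝ)+1+2/3) = ((m:ℝ)+2/3) * Real.Gamma ((m:ℝ)+2/3) := by
      rw [show (m:ℝ)+1+2/3 = ((m:ℝ)+2/3)+1 by ring, Real.Gamma_add_one (by positivity)]
    have h2 : Real.Gamma (-((m:ℝ)+1)-1/3) = Real.Gamma (-(m:ℝ)-4/3) := by norm_num; ring_nf
    have hf : ((3*(m+1)+1).factorial : ℝ)
        = (3*(m:ℝ)+4) * (3*(m:ℝ)+3) * (3*(m:ℝ)+2) * ((3*m+1).factorial : ℝ) := by
      rw [show 3*(m+1)+1 = (3*m+1)+1+1+1 by ring]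
      simp [Nat.factorial_succ]; push_cast; ring
    have hfm : (((m+1)).factorial : ℝ) = ((m:ℝ)+1) * (m.factorial : ℝ) := by
      simp [Nat.factorial_succ]
    have h3 : Real.Gamma (-(m:ℝ)-1/3) = (-(m:ℝ)-4/3) * Real.Gamma (-(m:ℝ)-4/3) := by
      rw [show -(m:ℝ)-1/3 = (-(m:ℝ)-4/3)+1 by ring,
        Real.Gamma_add_one (by nlinarith [Nat.cast_nonneg (α := ℝ) m])]
    rw [h3] at ih
    push_cast [hf, h1, h2, hfm]
    linear_combination (27*((m:ℝ)+1)*((m:ℝ)+2/3)) * ih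

lemma gammaC2 (m : ℕ) : (3:ℝ)^(3*m+2) * (m.factorial:ℝ) * Real.Gamma ((m:ℝ)+4/3)
    = (-1:ℝ)^(m+1) * ((3*m+2).factorial : ℝ) * Real.Gamma (-(m:ℝ)-2/3) := by
  induction m with
  | zero =>
    have h : Real.Gamma ((1:ℝ)/3) = (-2/3) * Real.Gamma (-2/3) := by
      rw [show (1:ℝ)/3 = -2/3+1 by norm_num]; exact Real.Gamma_add_one (by norm_num)
    have h4 : Real.Gamma ((4:ℝ)/3) = (1/3) * Real.Gamma (1/3) := by
      rw [show (4:ℝ)/3 = 1/3+1 by norm_num]; exact Real.Gamma_add_one (by norm_num)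
    norm_num [h4, h, Nat.factorial]; ring
  | succ m ih =>
    have h1 : Real.Gamma ((m:ℝ)+1+4/3) = ((m:ℝ)+4/3) * Real.Gamma ((m:ℝ)+4/3) := by
      rw [show (m:ℝ)+1+4/3 = ((m:ℝ)+4/3)+1 by ring, Real.Gamma_add_one (by positivity)]
    have h2 : Real.Gamma (-((m:ℝ)+1)-2/3) = Real.Gamma (-(m:ℝ)-5/3) := by norm_num; ring_nf
    have hf : ((3*(m+1)+2).factorial : ℝ)
        = (3*(m:ℝ)+5) * (3*(m:ℝ)+4) * (3*(m:ℝ)+3) * ((3*m+2).factorial : ℝ) := by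
      rw [show 3*(m+1)+2 = (3*m+2)+1+1+1 by ring]
      simp [Nat.factorial_succ]; push_cast; ring
    have hfm : (((m+1)).factorial : ℝ) = ((m:ℝ)+1) * (m.factorial : ℝ) := by
      simp [Nat.factorial_succ]
    have h3 : Real.Gamma (-(m:ℝ)-2/3) = (-(m:ℝ)-5/3) * Real.Gamma (-(m:ℝ)-5/3) := by
      rw [show -(m:ℝ)-2/3 = (-(m:ℝ)-5/3)+1 by ring,
        Real.Gamma_add_one (by nlinarith [Nat.cast_nonneg (α := ℝ) m])]
    rw [h3] at ih
    push_cast [hf, h1, h2, hfm]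
    linear_combination (27*((m:ℝ)+1)*((m:ℝ)+4/3)) * ih

lemma summable_gamma_aux (r a : ℝ) (h0 : 0 ≤ r) (ha : 0 < a) :
    Summable (fun m : ℕ => r ^ m / ((m.factorial : ℝ) * Real.Gamma ((m:ℝ)+a))) := by
  apply summable_of_ratio_norm_eventually_le (r := 1/2) (by norm_num)
  filter_upwards [eventually_ge_atTop (max 1 ⌈2*r⌉₊)] with m hm
  have hm1 : 1 ≤ m := le_of_max_le_left hm
  have hm2 : 2*r ≤ (m:ℝ) := by
    calc 2*r ≤ (⌈2*r⌉₊ : ℝ) := Nat.le_ceil _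
    _ ≤ (m:ℝ) := by exact_mod_cast le_of_max_le_right hm
  have hGpos : 0 < Real.Gamma ((m:ℝ)+a) := Real.Gamma_pos_of_pos (by positivity)
  have hG1 : Real.Gamma (((m+1:ℕ):ℝ)+a) = ((m:ℝ)+a) * Real.Gamma ((m:ℝ)+a) := by
    push_cast
    rw [show (m:ℝ)+1+a = ((m:ℝ)+a)+1 by ring, Real.Gamma_add_one (by positivity)]
  have hfm : (((m+1)).factorial : ℝ) = ((m:ℝ)+1) * (m.factorial : ℝ) := by
    simp [Nat.factorial_succ]
  have hfpos : (0:ℝ) < m.factorial := by positivity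
  rw [Real.norm_eq_abs, Real.norm_eq_abs, hG1, hfm, abs_div, abs_div,
    abs_of_nonneg (by positivity : (0:ℝ) ≤ r ^ (m+1)),
    abs_of_nonneg (by positivity : (0:ℝ) ≤ r ^ m),
    abs_of_pos (by positivity), abs_of_pos (by positivity)]
  rw [div_le_iff₀ (by positivity), pow_succ]
  have hma : 1 ≤ (m:ℝ)+a := by
    have : (1:ℝ) ≤ (m:ℝ) := by exact_mod_cast hm1
    linarith
  have key : r ≤ 1/2 * (((m:ℝ)+1) * ((m:ℝ)+a)) := by
    nlinarith [hm2, hma, Nat.cast_nonneg (α := ℝ) m]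
  have heq : 1/2 * (r ^ m / ((m.factorial:ℝ) * Real.Gamma ((m:ℝ)+a))) *
      (((m:ℝ)+1) * (m.factorial:ℝ) * (((m:ℝ)+a) * Real.Gamma ((m:ℝ)+a)))
      = r ^ m * (1/2 * (((m:ℝ)+1) * ((m:ℝ)+a))) := by
    field_simp
  rw [heq]
  exact mul_le_mul_of_nonneg_left key (by positivity)

theorem redWright_third_besselJ_rep (x : ℝ) (hx : 0 < x) :
    redWright (-1/3) x =
      -(x ^ ((3 : ℝ) / 2) / (3 * Real.sqrt 3)) *
        (besselJ (-1/3) (2 * x ^ ((3 : ℝ) / 2) / (3 * Real.sqrt 3)) +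
         besselJ (1/3) (2 * x ^ ((3 : ℝ) / 2) / (3 * Real.sqrt 3))) := by
  have hs3 : (0:ℝ) < Real.sqrt 3 := by positivity
  set c : ℝ := x ^ ((3 : ℝ) / 2) / (3 * Real.sqrt 3) with hc
  have hc_pos : 0 < c := by positivity
  have h3s : (3:ℝ) ^ ((3:ℝ)/2) = 3 * Real.sqrt 3 := by
    have hsq : Real.sqrt 3 = (3:ℝ) ^ ((1:ℝ)/2) := Real.sqrt_eq_rpow 3
    rw [show (3:ℝ)/2 = 1 + (1:ℝ)/2 by norm_num, Real.rpow_add (by norm_num), Real.rpow_one, hsq]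
  have hc_eq : c = (x/3) ^ ((3:ℝ)/2) := by
    rw [hc, Real.div_rpow hx.le (by norm_num), h3s]
  -- power computation
  have hcp : ∀ (t : ℝ) (k : ℕ), (3:ℝ)/2 * t = (k:ℝ) → c ^ t = x^k / 3^k := by
    intro t k hk
    have h1 : ((x/3) : ℝ) ^ ((3:ℝ)/2 * t) = ((x/3) ^ ((3:ℝ)/2)) ^ t :=
      Real.rpow_mul (by positivity) _ _
    rw [hc_eq, ← h1, hk, Real.rpow_natCast, div_pow]
  -- the summand of redWright
  set F : ℕ → ℝ := fun n =>
    x ^ (n + 1) / (((n + 1).factorial : ℝ) * Real.Gamma ((-1/3) * ((n : ℝ) + 1))) with hF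
  -- termwise identities
  have hGamne : ∀ m : ℕ, Real.Gamma (-(m:ℝ)-1/3) ≠ 0 := by
    intro m
    intro h
    have := gammaC1 m
    rw [h, mul_zero] at this
    have h1 : (0:ℝ) < (3:ℝ)^(3*m+1) * (m.factorial:ℝ) * Real.Gamma ((m:ℝ)+2/3) := by
      have := Real.Gamma_pos_of_pos (show (0:ℝ) < (m:ℝ)+2/3 by positivity)
      positivity
    linarith [this ▸ h1]
  have hGamne2 : ∀ m : ℕ, Real.Gamma (-(m:ℝ)-2/3) ≠ 0 := by
    intro m
    intro h
    have := gammaC2 m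
    rw [h, mul_zero] at this
    have h1 : (0:ℝ) < (3:ℝ)^(3*m+2) * (m.factorial:ℝ) * Real.Gamma ((m:ℝ)+4/3) := by
      have := Real.Gamma_pos_of_pos (show (0:ℝ) < (m:ℝ)+4/3 by positivity)
      positivity
    linarith [this ▸ h1]
  have hT1 : ∀ m : ℕ, F (3*m) =
      -((-1:ℝ)^m * (x^(3*m+1) / ((3:ℝ)^(3*m+1) * (m.factorial:ℝ) * Real.Gamma ((m:ℝ)+2/3)))) := by
    intro m
    have harg : (-1/3 : ℝ) * (((3*m : ℕ):ℝ) + 1) = -(m:ℝ)-1/3 := by push_cast; ring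
    have hG2 : (0:ℝ) < Real.Gamma ((m:ℝ)+2/3) := Real.Gamma_pos_of_pos (by positivity)
    have hfac : (0:ℝ) < ((3*m+1).factorial : ℝ) := by positivity
    have hfm : (0:ℝ) < (m.factorial : ℝ) := by positivity
    have hkey := gammaC1 m
    set G1 := Real.Gamma ((m:ℝ)+2/3) with hG1d
    set G2 := Real.Gamma (-(m:ℝ)-1/3) with hG2d
    simp only [hF, harg, ← hG2d]
    rw [div_eq_iff (by exact mul_ne_zero (ne_of_gt hfac) (hGamne m))]
    have hG2ne : G2 ≠ 0 := hGamne m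
    rw [hkey, pow_succ]
    field_simp
    ring
  have hT2 : ∀ m : ℕ, F (3*m+1) =
      -((-1:ℝ)^m * (x^(3*m+2) / ((3:ℝ)^(3*m+2) * (m.factorial:ℝ) * Real.Gamma ((m:ℝ)+4/3)))) := by
    intro m
    have harg : (-1/3 : ℝ) * (((3*m+1 : ℕ):ℝ) + 1) = -(m:ℝ)-2/3 := by push_cast; ring
    have hG2 : (0:ℝ) < Real.Gamma ((m:ℝ)+4/3) := Real.Gamma_pos_of_pos (by positivity)
    have hfac : (0:ℝ) < ((3*m+2).factorial : ℝ) := by positivity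
    have hkey := gammaC2 m
    set G1 := Real.Gamma ((m:ℝ)+4/3) with hG1d
    set G2 := Real.Gamma (-(m:ℝ)-2/3) with hG2d
    simp only [hF, harg, ← hG2d]
    rw [show 3*m+1+1 = 3*m+2 by ring]
    rw [div_eq_iff (by exact mul_ne_zero (ne_of_gt hfac) (hGamne2 m))]
    have hG2ne : G2 ≠ 0 := hGamne2 m
    rw [hkey, pow_succ]
    field_simp
    ring
  -- summability of the two subsequences
  have hS1 : Summable (fun m : ℕ => F (3*m)) := by
    apply Summable.of_norm
    have base := (summable_gamma_aux (x^3/27) (2/3) (by positivity) (by norm_num)).mul_left (x/3)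
    apply Summable.congr base
    intro m
    have hG2 : (0:ℝ) < Real.Gamma ((m:ℝ)+2/3) := Real.Gamma_pos_of_pos (by positivity)
    have ht : (0:ℝ) ≤ x^(3*m+1) / ((3:ℝ)^(3*m+1) * (m.factorial:ℝ) * Real.Gamma ((m:ℝ)+2/3)) := by
      positivity
    rw [hT1 m, norm_neg, Real.norm_eq_abs, abs_mul, abs_pow, abs_neg, abs_one, one_pow, one_mul,
      abs_of_nonneg ht]
    have hfm : (0:ℝ) < (m.factorial : ℝ) := by positivity
    rw [show x^(3*m+1) = (x^3)^m * x by rw [pow_succ, pow_mul],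
      show (3:ℝ)^(3*m+1) = (27:ℝ)^m*3 by
        rw [pow_succ, pow_mul]; norm_num]
    rw [div_pow]
    field_simp
  have hS2 : Summable (fun m : ℕ => F (3*m+1)) := by
    apply Summable.of_norm
    have base := (summable_gamma_aux (x^3/27) (4/3) (by positivity) (by norm_num)).mul_left (x^2/9)
    apply Summable.congr base
    intro m
    have hG2 : (0:ℝ) < Real.Gamma ((m:ℝ)+4/3) := Real.Gamma_pos_of_pos (by positivity)
    have ht : (0:ℝ) ≤ x^(3*m+2) / ((3:ℝ)^(3*m+2) * (m.factorial:ℝ) * Real.Gamma ((m:ℝ)+4/3)) := by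
      positivity
    rw [hT2 m, norm_neg, Real.norm_eq_abs, abs_mul, abs_pow, abs_neg, abs_one, one_pow, one_mul,
      abs_of_nonneg ht]
    have hfm : (0:ℝ) < (m.factorial : ℝ) := by positivity
    rw [show x^(3*m+2) = (x^3)^m * x^2 by rw [pow_add, pow_mul],
      show (3:ℝ)^(3*m+2) = (27:ℝ)^m*9 by
        rw [pow_add, pow_mul]; norm_num]
    rw [div_pow]
    field_simp
  -- splitting the sum
  set F1 : ℕ → ℝ := fun n => if n % 3 = 0 then F n else 0 with hF1
  set F2 : ℕ → ℝ := fun n => if n % 3 = 1 then F n else 0 with hF2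
  have hvanish : ∀ k : ℕ, F (3*k+2) = 0 := by
    intro k
    have harg : (-1/3 : ℝ) * (((3*k+2 : ℕ):ℝ) + 1) = -(((k+1 : ℕ)):ℝ) := by push_cast; ring
    simp only [hF]
    rw [harg, Real.Gamma_neg_nat_eq_zero, mul_zero, div_zero]
  have hsplit : ∀ n, F n = F1 n + F2 n := by
    intro n
    have h : n % 3 = 0 ∨ n % 3 = 1 ∨ n % 3 = 2 := by omega
    rcases h with h | h | h
    · simp [hF1, hF2, h]
    · simp [hF1, hF2, h]
    · obtain ⟨k, rfl⟩ : ∃ k, n = 3*k+2 := ⟨n/3, by omega⟩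
      simp [hF1, hF2, h, hvanish k]
  have hinj1 : Function.Injective (fun m : ℕ => 3*m) := by
    intro a b h; dsimp only at h; omega
  have hinj2 : Function.Injective (fun m : ℕ => 3*m+1) := by
    intro a b h; dsimp only at h; omega
  have hrange1 : Function.support F1 ⊆ Set.range (fun m : ℕ => 3*m) := by
    intro n hn
    simp only [Function.mem_support, hF1] at hn
    by_cases h : n % 3 = 0
    · exact ⟨n/3, by dsimp only; omega⟩
    · simp [h] at hn
  have hrange2 : Function.support F2 ⊆ Set.range (fun m : ℕ => 3*m+1) := by
    intro n hn
    simp only [Function.mem_support, hF2] at hn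
    by_cases h : n % 3 = 1
    · exact ⟨n/3, by dsimp only; omega⟩
    · simp [h] at hn
  have hzero1 : ∀ n ∉ Set.range (fun m : ℕ => 3*m), F1 n = 0 := by
    intro n hn
    by_contra h
    exact hn (hrange1 h)
  have hzero2 : ∀ n ∉ Set.range (fun m : ℕ => 3*m+1), F2 n = 0 := by
    intro n hn
    by_contra h
    exact hn (hrange2 h)
  have hcomp1 : ∀ m : ℕ, F1 (3*m) = F (3*m) := by
    intro m
    simp [hF1, Nat.mul_mod_right]
  have hcomp2 : ∀ m : ℕ, F2 (3*m+1) = F (3*m+1) := by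
    intro m
    have h : (3*m+1) % 3 = 1 := by omega
    simp [hF2, h]
  have sF1 : Summable F1 := by
    refine (hinj1.summable_iff hzero1).mp ?_
    exact hS1.congr (fun m => (hcomp1 m).symm)
  have sF2 : Summable F2 := by
    refine (hinj2.summable_iff hzero2).mp ?_
    exact hS2.congr (fun m => (hcomp2 m).symm)
  have hsum1 : ∑' n, F1 n = ∑' m, F (3*m) := by
    rw [← Function.Injective.tsum_eq hinj1 hrange1]
    exact tsum_congr hcomp1
  have hsum2 : ∑' n, F2 n = ∑' m, F (3*m+1) := by
    rw [← Function.Injective.tsum_eq hinj2 hrange2]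
    exact tsum_congr hcomp2
  have hL : redWright (-1/3) x = (∑' m, F (3*m)) + (∑' m, F (3*m+1)) := by
    have h0 : redWright (-1/3) x = ∑' n, F n := rfl
    rw [h0, tsum_congr hsplit, Summable.tsum_add sF1 sF2, hsum1, hsum2]
  -- the right-hand side
  have hy2 : 2 * x ^ ((3:ℝ)/2) / (3 * Real.sqrt 3) / 2 = c := by
    rw [hc]; ring
  have hB1 : ∀ m : ℕ, (-c) * ((-1:ℝ)^m * c ^ (2*(m:ℝ) + (-1/3)) /
      ((m.factorial:ℝ) * Real.Gamma ((-1/3) + (m:ℝ) + 1))) = F (3*m) := by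
    intro m
    have he : c ^ (2*(m:ℝ) + (-1/3)) * c = c ^ (2*(m:ℝ) + (-1/3) + 1) :=
      (Real.rpow_add_one hc_pos.ne' _).symm
    have hk : c ^ (2*(m:ℝ) + (-1/3) + 1) = x^(3*m+1) / 3^(3*m+1) :=
      hcp _ _ (by push_cast; ring)
    have hGarg : Real.Gamma ((-1/3 : ℝ) + (m:ℝ) + 1) = Real.Gamma ((m:ℝ) + 2/3) := by
      norm_num; ring_nf
    rw [hGarg, hT1 m,
      show x^(3*m+1) / ((3:ℝ)^(3*m+1) * (m.factorial:ℝ) * Real.Gamma ((m:ℝ)+2/3))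
        = (x^(3*m+1)/3^(3*m+1)) / ((m.factorial:ℝ) * Real.Gamma ((m:ℝ)+2/3)) by ring,
      ← hk, ← he]
    ring
  have hB2 : ∀ m : ℕ, (-c) * ((-1:ℝ)^m * c ^ (2*(m:ℝ) + (1/3)) /
      ((m.factorial:ℝ) * Real.Gamma ((1/3) + (m:ℝ) + 1))) = F (3*m+1) := by
    intro m
    have he : c ^ (2*(m:ℝ) + (1/3)) * c = c ^ (2*(m:ℝ) + (1/3) + 1) :=
      (Real.rpow_add_one hc_pos.ne' _).symm
    have hk : c ^ (2*(m:ℝ) + (1/3) + 1) = x^(3*m+2) / 3^(3*m+2) :=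
      hcp _ _ (by push_cast; ring)
    have hGarg : Real.Gamma ((1/3 : ℝ) + (m:ℝ) + 1) = Real.Gamma ((m:ℝ) + 4/3) := by
      norm_num; ring_nf
    rw [hGarg, hT2 m,
      show x^(3*m+2) / ((3:ℝ)^(3*m+2) * (m.factorial:ℝ) * Real.Gamma ((m:ℝ)+4/3))
        = (x^(3*m+2)/3^(3*m+2)) / ((m.factorial:ℝ) * Real.Gamma ((m:ℝ)+4/3)) by ring,
      ← hk, ← he]
    ring
  have hR : -c * (besselJ (-1/3) (2 * x ^ ((3:ℝ)/2) / (3 * Real.sqrt 3))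
        + besselJ (1/3) (2 * x ^ ((3:ℝ)/2) / (3 * Real.sqrt 3)))
      = (∑' m, F (3*m)) + (∑' m, F (3*m+1)) := by
    simp only [besselJ, hy2]
    rw [mul_add, ← tsum_mul_left, ← tsum_mul_left]
    congr 1
    · exact tsum_congr fun m => hB1 m
    · exact tsum_congr fun m => hB2 m
  rw [hL, ← hR]
end
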